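/- Let k be a positive integer. A finite simple graph G admits a partition of its edge set into k parts each spanning a pseudoforest if and only if G admits an orientation of its edges in which every vertexter has outdegree at most k. -/

import Mathlib

open SimpleGraph

/-- The set of edges of the connected component `c` of the graph `H`. -/
def compEdges {V : Type*} (H : SimpleGraph V) (c : H.ConnectedComponent) : Set (Sym2 V) :=
  {e | e ∈ H.edgeSet ∧ ∀ v ∈ e, v ∈ c.supp}

/-- A graph is a pseudoforest if every connected component has at most as many
edges as vertices (equivalently, every component contains at most one cycle). -/
def IsPseudoforest {V : Type*} (H : SimpleGraph V) : Prop :=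
  ∀ c : H.ConnectedComponent, (compEdges H c).ncard ≤ c.supp.ncard

/-- `P` is a partition of the edge set of `G` into `m` parts,
each of which spans a pseudoforest. -/
def IsPseudoforestDecomp {V : Type*} (G : SimpleGraph V) (m : ℕ)
    (P : Fin m → Set (Sym2 V)) : Prop :=
  (∀ i, P i ⊆ G.edgeSet) ∧ (∀ i j, i ≠ j → Disjoint (P i) (P j)) ∧
    (⋃ i, P i) = G.edgeSet ∧ ∀ i, IsPseudoforest (SimpleGraph.fromEdgeSet (P i))

/-- `o` is an orientation of `G`: it assigns to each edge one of its endpoints as head. -/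
def IsOrientation {V : Type*} (G : SimpleGraph V) (o : Sym2 V → V) : Prop :=
  ∀ e ∈ G.edgeSet, o e ∈ e

/-- The outdegree of `v` under orientation `o`: the number of edges incident to `v`
that are oriented away from `v` (i.e. whose head is not `v`). -/
noncomputable def outDeg {V : Type*} (G : SimpleGraph V) (o : Sym2 V → V) (v : V) : ℕ :=
  {e | e ∈ G.edgeSet ∧ v ∈ e ∧ o e ≠ v}.ncard

lemma sym2_mk_out {V : Type*} (e : Sym2 V) : s(e.out.1, e.out.2) = e := by
  conv_rhs => rw [← e.out_eq]

section Core
variable {V : Type} [Fintype V]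

lemma core_card_le (H : SimpleGraph V) (c : H.ConnectedComponent)
    (hc : (compEdges H c).ncard ≤ c.supp.ncard) (s : Set (Sym2 V)) (hs : s ⊆ compEdges H c) :
    s.ncard ≤ {v | ∃ e ∈ s, v ∈ e}.ncard := by
  rcases s.eq_empty_or_nonempty with rfl | ⟨e0, he0⟩
  · simp
  set A : Set V := {v | ∃ e ∈ s, v ∈ e} with hA
  have hAne : A.Nonempty := ⟨e0.out.1, e0, he0, Sym2.out_fst_mem e0⟩
  have hAsupp : A ⊆ c.supp := by
    rintro v ⟨e, hes, hve⟩
    exact (hs hes).2 v hve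
  set D : V → ℕ := fun x => sInf ((H.dist x) '' A) with hD
  have key : ∀ v ∈ c.supp \ A, ∃ w, H.Adj v w ∧ D w < D v := by
    rintro v ⟨hv, hvA⟩
    have hne : ((H.dist v) '' A).Nonempty := hAne.image _
    obtain ⟨a, haA, hda⟩ := Nat.sInf_mem hne
    have hva : v ≠ a := fun h => hvA (h ▸ haA)
    have hreach : H.Reachable v a :=
      ConnectedComponent.exact (hv.trans (hAsupp haA).symm)
    obtain ⟨p, hp⟩ := hreach.exists_walk_length_eq_dist
    cases p with
    | nil => exact absurd rfl hva
    | cons h q =>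
      rename_i w
      refine ⟨w, h, ?_⟩
      have h1 : D w ≤ H.dist w a := Nat.sInf_le ⟨a, haA, rfl⟩
      have h2 : H.dist w a ≤ q.length := SimpleGraph.dist_le q
      have h3 : q.length + 1 = H.dist v a := by simpa using hp
      have h4 : D v = H.dist v a := hda.symm
      omega
  choose! w hw1 hw2 using key
  have hmaps : ∀ v ∈ c.supp \ A, s(v, w v) ∈ compEdges H c \ s := by
    intro v hv
    have hadj := hw1 v hv
    refine ⟨⟨hadj, ?_⟩, ?_⟩
    · intro u hu
      rcases Sym2.mem_iff.mp hu with rfl | rfl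
      · exact hv.1
      · have : H.connectedComponentMk (w v) = H.connectedComponentMk v :=
          ConnectedComponent.connectedComponentMk_eq_of_adj hadj.symm
        exact this.trans hv.1
    · intro hmem
      exact hv.2 ⟨s(v, w v), hmem, Sym2.mem_mk_left _ _⟩
  have hinj : Set.InjOn (fun v => s(v, w v)) (c.supp \ A) := by
    intro v₁ h₁ v₂ h₂ heq
    rcases Sym2.eq_iff.mp heq with ⟨h, _⟩ | ⟨ha, hb⟩
    · exact h
    · have k1 := hw2 v₁ h₁
      have k2 := hw2 v₂ h₂
      rw [hb] at k1
      rw [← ha] at k2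
      omega
  have h1 : (c.supp \ A).ncard ≤ (compEdges H c \ s).ncard :=
    Set.ncard_le_ncard_of_injOn _ hmaps hinj (Set.toFinite _)
  have h2 : (c.supp \ A).ncard = c.supp.ncard - A.ncard := Set.ncard_diff hAsupp (Set.toFinite _)
  have h3 : (compEdges H c \ s).ncard = (compEdges H c).ncard - s.ncard :=
    Set.ncard_diff hs (Set.toFinite _)
  have h4 : s.ncard ≤ (compEdges H c).ncard := Set.ncard_le_ncard hs (Set.toFinite _)
  have h5 : A.ncard ≤ c.supp.ncard := Set.ncard_le_ncard hAsupp (Set.toFinite _)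
  omega

end Core

section Tail
variable {V : Type} [Fintype V]

lemma comp_tail (H : SimpleGraph V) (c : H.ConnectedComponent)
    (hc : (compEdges H c).ncard ≤ c.supp.ncard) :
    ∃ t : Sym2 V → V, (∀ e, t e ∈ e) ∧ Set.InjOn t (compEdges H c) := by
  classical
  set T : compEdges H c → Finset V := fun e => {(e : Sym2 V).out.1, (e : Sym2 V).out.2} with hT
  have hTmem : ∀ (e : compEdges H c) (v : V), v ∈ T e ↔ v ∈ (e : Sym2 V) := by
    intro e v
    simp only [hT, Finset.mem_insert, Finset.mem_singleton]
    rw [← Sym2.mem_iff (b := (e : Sym2 V).out.1) (c := (e : Sym2 V).out.2), sym2_mk_out]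
  have hall : ∀ s : Finset (compEdges H c), s.card ≤ (s.biUnion T).card := by
    intro s
    have hs' : (Subtype.val '' (↑s : Set (compEdges H c))) ⊆ compEdges H c := by
      rintro e ⟨⟨e', he'⟩, _, rfl⟩; exact he'
    have hcore := core_card_le H c hc _ hs'
    have h1 : (Subtype.val '' (↑s : Set (compEdges H c))).ncard = s.card := by
      rw [Set.ncard_image_of_injective _ Subtype.coe_injective, Set.ncard_coe_finset]
    have h2 : {v | ∃ e ∈ Subtype.val '' (↑s : Set (compEdges H c)), v ∈ e} =
        ↑(s.biUnion T) := by
      ext v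
      simp only [Set.mem_setOf_eq, Finset.coe_biUnion, Set.mem_iUnion, Finset.mem_coe,
        Set.mem_image, Finset.mem_coe]
      constructor
      · rintro ⟨e, ⟨⟨e', he'⟩, hes, rfl⟩, hve⟩
        exact ⟨⟨e', he'⟩, hes, (hTmem _ v).mpr hve⟩
      · rintro ⟨e, hes, hv⟩
        exact ⟨e, ⟨e, hes, rfl⟩, (hTmem e v).mp hv⟩
    rw [h1, h2, Set.ncard_coe_finset] at hcore
    exact hcore
  obtain ⟨f, hfinj, hft⟩ := (Finset.all_card_le_biUnion_card_iff_exists_injective T).mp hall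
  refine ⟨fun e => if h : e ∈ compEdges H c then f ⟨e, h⟩ else e.out.1, ?_, ?_⟩
  · intro e
    dsimp only
    by_cases h : e ∈ compEdges H c
    · rw [dif_pos h]
      exact (hTmem ⟨e, h⟩ _).mp (hft ⟨e, h⟩)
    · rw [dif_neg h]; exact Sym2.out_fst_mem e
  · intro e₁ h₁ e₂ h₂ heq
    dsimp only at heq
    rw [dif_pos h₁, dif_pos h₂] at heq
    exact congrArg Subtype.val (hfinj heq)

lemma graph_tail (H : SimpleGraph V) (hH : IsPseudoforest H) :
    ∃ t : Sym2 V → V, (∀ e, t e ∈ e) ∧ Set.InjOn t H.edgeSet := by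
  classical
  choose t ht1 ht2 using fun c => comp_tail H c (hH c)
  have edge_mem_comp : ∀ e ∈ H.edgeSet, e ∈ compEdges H (H.connectedComponentMk e.out.1) := by
    intro e he
    have hadj : H.Adj e.out.1 e.out.2 := by
      rw [← SimpleGraph.mem_edgeSet, sym2_mk_out]; exact he
    refine ⟨he, ?_⟩
    intro v hv
    rw [← sym2_mk_out e] at hv
    rcases Sym2.mem_iff.mp hv with rfl | rfl
    · rfl
    · exact ConnectedComponent.connectedComponentMk_eq_of_adj hadj.symm
  refine ⟨fun e => if h : e ∈ H.edgeSet then t (H.connectedComponentMk e.out.1) e else e.out.1,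
    ?_, ?_⟩
  · intro e
    dsimp only
    by_cases h : e ∈ H.edgeSet
    · rw [dif_pos h]; exact ht1 _ e
    · rw [dif_neg h]; exact Sym2.out_fst_mem e
  · intro e₁ h₁ e₂ h₂ heq
    dsimp only at heq
    rw [dif_pos h₁, dif_pos h₂] at heq
    set c₁ := H.connectedComponentMk e₁.out.1
    set c₂ := H.connectedComponentMk e₂.out.1
    have hm₁ : e₁ ∈ compEdges H c₁ := edge_mem_comp e₁ h₁
    have hm₂ : e₂ ∈ compEdges H c₂ := edge_mem_comp e₂ h₂
    have hx₁ : t c₁ e₁ ∈ c₁.supp := hm₁.2 _ (ht1 c₁ e₁)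
    have hx₂ : t c₂ e₂ ∈ c₂.supp := hm₂.2 _ (ht1 c₂ e₂)
    have hcc : c₁ = c₂ := by
      rw [ConnectedComponent.mem_supp_iff] at hx₁ hx₂
      rw [← hx₁, ← hx₂, heq]
    rw [hcc] at heq hm₁
    exact ht2 c₂ hm₁ hm₂ heq

end Tail

theorem pseudoforest_decomposition_iff_orientation
    (k : ℕ) (hk : 0 < k) (V : Type) [Fintype V] (G : SimpleGraph V) :
    (∃ P : Fin k → Set (Sym2 V), IsPseudoforestDecomp G k P) ↔
      ∃ o : Sym2 V → V, IsOrientation G o ∧ ∀ v : V, outDeg G o v ≤ k := by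
  classical
  constructor
  · rintro ⟨P, hPsub, hPdisj, hPunion, hPpf⟩
    have hE : ∀ i, (fromEdgeSet (P i)).edgeSet = P i := by
      intro i
      rw [edgeSet_fromEdgeSet]
      apply sdiff_eq_left.mpr
      rw [Set.disjoint_left]
      intro e he hd
      exact G.not_isDiag_of_mem_edgeSet (hPsub i he) hd
    choose t ht1 ht2 using fun i => graph_tail (fromEdgeSet (P i)) (hPpf i)
    have ht2' : ∀ i, Set.InjOn (t i) (P i) := fun i => (hE i) ▸ ht2 i
    have idx : ∀ e ∈ G.edgeSet, ∃ i, e ∈ P i := by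
      intro e he
      rw [← hPunion] at he
      exact Set.mem_iUnion.mp he
    set I : Sym2 V → Fin k := fun e =>
      if h : e ∈ G.edgeSet then (idx e h).choose else ⟨0, hk⟩ with hI
    have hImem : ∀ e (h : e ∈ G.edgeSet), e ∈ P (I e) := by
      intro e h
      simp only [hI, dif_pos h]
      exact (idx e h).choose_spec
    set o : Sym2 V → V := fun e => Sym2.Mem.other (ht1 (I e) e) with ho
    refine ⟨o, fun e _ => Sym2.other_mem _, ?_⟩
    intro v
    have htail : ∀ e, e ∈ G.edgeSet → v ∈ e → o e ≠ v → t (I e) e = v := by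
      intro e he hv hov
      have hsp := Sym2.other_spec (ht1 (I e) e)
      rw [← hsp] at hv
      rcases Sym2.mem_iff.mp hv with h | h
      · exact h.symm
      · exact absurd h.symm hov
    have hinj : Set.InjOn I {e | e ∈ G.edgeSet ∧ v ∈ e ∧ o e ≠ v} := by
      rintro e₁ ⟨he₁, hv₁, hov₁⟩ e₂ ⟨he₂, hv₂, hov₂⟩ hIe
      have hm₁ := hImem e₁ he₁
      have hm₂ := hImem e₂ he₂
      rw [hIe] at hm₁
      apply ht2' (I e₂) hm₁ hm₂
      have k₁ := htail e₁ he₁ hv₁ hov₁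
      have k₂ := htail e₂ he₂ hv₂ hov₂
      rw [hIe] at k₁
      rw [k₁, k₂]
    calc outDeg G o v ≤ (Set.univ : Set (Fin k)).ncard :=
          Set.ncard_le_ncard_of_injOn I (fun a _ => Set.mem_univ _) hinj Set.finite_univ
      _ = k := by simp [Set.ncard_univ]
  · rintro ⟨o, ho, hdeg⟩
    set t : Sym2 V → V := fun e =>
      if h : e ∈ G.edgeSet then Sym2.Mem.other (ho e h) else e.out.1 with ht
    have htmem : ∀ e, t e ∈ e := by
      intro e
      simp only [ht]
      split
      · exact Sym2.other_mem _
      · exact Sym2.out_fst_mem e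
    have hspec : ∀ e (h : e ∈ G.edgeSet), s(o e, t e) = e := by
      intro e h
      simp only [ht, dif_pos h]
      exact Sym2.other_spec (ho e h)
    have hne : ∀ e (h : e ∈ G.edgeSet), o e ≠ t e := by
      intro e h hc
      apply G.not_isDiag_of_mem_edgeSet h
      rw [← hspec e h, hc]
      exact Sym2.mk_isDiag_iff.mpr rfl
    set Out : V → Set (Sym2 V) := fun v => {e | e ∈ G.edgeSet ∧ t e = v} with hOut
    have hOutEq : ∀ v, {e | e ∈ G.edgeSet ∧ v ∈ e ∧ o e ≠ v} = Out v := by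
      intro v
      ext e
      simp only [hOut, Set.mem_setOf_eq]
      constructor
      · rintro ⟨he, hv, hov⟩
        refine ⟨he, ?_⟩
        rw [← hspec e he] at hv
        rcases Sym2.mem_iff.mp hv with h | h
        · exact absurd h.symm hov
        · exact h.symm
      · rintro ⟨he, hte⟩
        exact ⟨he, hte ▸ htmem e, fun hc => hne e he (hc.trans hte.symm)⟩
    have hcard : ∀ v, (Out v).ncard ≤ k := by
      intro v
      rw [← hOutEq v]
      exact hdeg v
    have hemb : ∀ v, ∃ φ : Sym2 V → Fin k, Set.InjOn φ (Out v) := by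
      intro v
      have hfin : (Out v).Finite := Set.toFinite _
      haveI := hfin.fintype
      have hcard' : Fintype.card (Out v) ≤ Fintype.card (Fin k) := by
        rw [Fintype.card_fin]
        calc Fintype.card (Out v) = (Out v).ncard := by
              rw [← Nat.card_eq_fintype_card, Nat.card_coe_set_eq]
          _ ≤ k := hcard v
      obtain ⟨f⟩ := Function.Embedding.nonempty_of_card_le hcard'
      refine ⟨fun e => if h : e ∈ Out v then f ⟨e, h⟩ else ⟨0, hk⟩, ?_⟩
      intro a ha b hb hab
      dsimp only at hab
      rw [dif_pos ha, dif_pos hb] at hab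
      exact congrArg Subtype.val (f.injective hab)
    choose φ hφ using hemb
    refine ⟨fun i => {e | e ∈ G.edgeSet ∧ φ (t e) e = i}, ?_, ?_, ?_, ?_⟩
    · intro i e he
      exact he.1
    · intro i j hij
      rw [Set.disjoint_left]
      rintro e ⟨_, hei⟩ ⟨_, hej⟩
      exact hij (hei ▸ hej ▸ rfl)
    · ext e
      simp only [Set.mem_iUnion, Set.mem_setOf_eq]
      constructor
      · rintro ⟨i, he, _⟩
        exact he
      · intro he
        exact ⟨φ (t e) e, he, rfl⟩
    · intro i c
      apply Set.ncard_le_ncard_of_injOn t ?_ ?_ (Set.toFinite _)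
      · rintro e he
        exact he.2 (t e) (htmem e)
      · rintro e₁ he₁ e₂ he₂ hte
        have h₁ : e₁ ∈ G.edgeSet ∧ φ (t e₁) e₁ = i := by
          have := he₁.1
          rw [edgeSet_fromEdgeSet] at this
          exact this.1
        have h₂ : e₂ ∈ G.edgeSet ∧ φ (t e₂) e₂ = i := by
          have := he₂.1
          rw [edgeSet_fromEdgeSet] at this
          exact this.1
        have he₁' : e₁ ∈ Out (t e₂) := ⟨h₁.1, hte⟩
        have he₂' : e₂ ∈ Out (t e₂) := ⟨h₂.1, rfl⟩
        apply hφ (t e₂) he₁' he₂'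
        have : φ (t e₂) e₁ = i := hte ▸ h₁.2
        rw [this, h₂.2]
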